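/- Let ν ∈ (0,1], λ > 0, and E_ν = E_{ν,1}. Define the fractional linear birth probabilities p̂_k^ν(t) = ∑_{j=1}^k C(k-1, j-1)(-1)^{j-1} E_ν(-λ j t^ν) for k ≥ 1. Then for any n₀ ≥ 1 and t > 0, 1 - ∑_{k=1}^{n₀} p̂_k^ν(t) = ∑_{l=0}^{n₀} C(n₀, l)(-1)^l E_ν(-λ l t^ν). -/

import Mathlib

open Finset

lemma hockey_aux (j n : ℕ) (hj : 1 ≤ j) :
    ∑ k ∈ Icc j n, (k - 1).choose (j - 1) = n.choose j := by
  obtain ⟨i, rfl⟩ : ∃ i, j = i + 1 := ⟨j - 1, by omega⟩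
  rcases Nat.eq_zero_or_pos n with rfl | hn
  · simp
  obtain ⟨m, rfl⟩ : ∃ m, n = m + 1 := ⟨n - 1, by omega⟩
  have : Icc (i + 1) (m + 1) = (Icc i m).map (addRightEmbedding 1) := by
    rw [Finset.map_add_right_Icc]
  rw [this, Finset.sum_map]
  simp only [addRightEmbedding_apply, Nat.add_sub_cancel]
  exact Nat.sum_Icc_choose m i

theorem stmt_19 (ν : ℝ) (hν : ν ∈ Set.Ioc (0 : ℝ) 1) (lam : ℝ) (hlam : 0 < lam)
    (E : ℝ → ℝ) (hE : ∀ x, E x = ∑' h : ℕ, x ^ h / Real.Gamma (ν * h + 1))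
    (n₀ : ℕ) (hn : 1 ≤ n₀) (t : ℝ) (ht : 0 < t) :
    1 - ∑ k ∈ Finset.Icc 1 n₀, ∑ j ∈ Finset.Icc 1 k,
        ((k - 1).choose (j - 1) : ℝ) * (-1) ^ (j - 1) * E (-(lam * j * t ^ ν)) =
      ∑ l ∈ Finset.range (n₀ + 1), (n₀.choose l : ℝ) * (-1) ^ l * E (-(lam * l * t ^ ν)) := by
  have hE0 : E 0 = 1 := by
    rw [hE, tsum_eq_single 0 (by intro h hh; simp [zero_pow hh])]
    simp [Real.Gamma_one]
  set g : ℕ → ℝ := fun j => E (-(lam * j * t ^ ν)) with hg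
  have hswap : ∑ k ∈ Icc 1 n₀, ∑ j ∈ Icc 1 k,
      ((k - 1).choose (j - 1) : ℝ) * (-1) ^ (j - 1) * g j
      = ∑ j ∈ Icc 1 n₀, ((n₀.choose j : ℝ) * (-1) ^ (j - 1) * g j) := by
    rw [Finset.sum_comm' (t' := Icc 1 n₀) (s' := fun j => Icc j n₀)
      (by intro k j; simp only [Finset.mem_Icc]; omega)]
    refine Finset.sum_congr rfl fun j hj => ?_
    simp only [Finset.mem_Icc] at hj
    simp only [mul_assoc, ← Finset.sum_mul]
    rw [← Nat.cast_sum, hockey_aux j n₀ hj.1]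
  -- RHS: split off l = 0
  rw [Finset.range_eq_Ico, Finset.sum_eq_sum_Ico_succ_bot (by omega)]
  rw [Finset.Ico_add_one_right_eq_Icc]
  simp only [Nat.choose_zero_right, Nat.cast_one, pow_zero, Nat.cast_zero, one_mul]
  have h0 : E (-(lam * 0 * t ^ ν)) = 1 := by
    rw [show -(lam * 0 * t ^ ν) = 0 by ring, hE0]
  rw [h0, hswap]
  have : ∀ l ∈ Icc 1 n₀, (n₀.choose l : ℝ) * (-1) ^ l * g l
      = -((n₀.choose l : ℝ) * (-1) ^ (l - 1) * g l) := by
    intro l hl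
    simp only [Finset.mem_Icc] at hl
    obtain ⟨i, rfl⟩ : ∃ i, l = i + 1 := ⟨l - 1, by omega⟩
    simp only [Nat.add_sub_cancel, pow_succ]
    ring
  rw [Finset.sum_congr rfl this, Finset.sum_neg_distrib]
  ring
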